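/- (Theorem 1, Low-Rank Safety Alignment.) Let X_low be a real N_h×d matrix, X_safe a real N_s×d matrix, D a real N_h×m matrix, γ ≥ 0, λ > 0 real numbers, and r a natural number. Define J(Δ) = ‖X_low Δ − D‖_F² + γ‖X_safe Δ‖_F² + λ‖Δ‖_F², Q = X_lowᵀ X_low + γ X_safeᵀ X_safe + λ I, and M = Q⁻¹ X_lowᵀ D; let R be an invertible real d×d matrix with Rᵀ R = Q. Suppose R M = U Σ Vᵀ where U ∈ ℝ^{d×d} and V ∈ ℝ^{m×m} are orthogonal matrices and Σ ∈ ℝ^{d×m} satisfies Σ_{ij} = 0 for i ≠ j and Σ_{11} ≥ Σ_{22} ≥ … ≥ 0 on the diagonal. Let Σ_r be obtained from Σ by setting all diagonal entries beyond the first r to zero. Then Δ* = R⁻¹ U Σ_r Vᵀ satisfies rank(Δ*) ≤ r and J(Δ*) ≤ J(Δ) for every Δ ∈ ℝ^{d×m} with rank(Δ) ≤ r. -/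

import Mathlib

open Matrix Finset Module

/-- The objective `J(Δ) = ‖Xlow Δ − D‖_F² + γ‖Xsafe Δ‖_F² + lam‖Δ‖_F²`,
where `‖A‖_F² = Tr(Aᵀ A)`. -/
noncomputable def J {Nh Ns d m : ℕ} (Xlow : Matrix (Fin Nh) (Fin d) ℝ)
    (Xsafe : Matrix (Fin Ns) (Fin d) ℝ) (D : Matrix (Fin Nh) (Fin m) ℝ)
    (γ lam : ℝ) (Δ : Matrix (Fin d) (Fin m) ℝ) : ℝ :=
  Matrix.trace ((Xlow * Δ - D)ᵀ * (Xlow * Δ - D))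
    + γ * Matrix.trace ((Xsafe * Δ)ᵀ * (Xsafe * Δ))
    + lam * Matrix.trace (Δᵀ * Δ)

/-- `Q = Xlowᵀ Xlow + γ Xsafeᵀ Xsafe + lam I`. -/
noncomputable def Qmat {Nh Ns d : ℕ} (Xlow : Matrix (Fin Nh) (Fin d) ℝ)
    (Xsafe : Matrix (Fin Ns) (Fin d) ℝ) (γ lam : ℝ) : Matrix (Fin d) (Fin d) ℝ :=
  Xlowᵀ * Xlow + γ • (Xsafeᵀ * Xsafe) + lam • (1 : Matrix (Fin d) (Fin d) ℝ)

/-- `M = Q⁻¹ Xlowᵀ D`. -/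
noncomputable def Mmat {Nh Ns d m : ℕ} (Xlow : Matrix (Fin Nh) (Fin d) ℝ)
    (Xsafe : Matrix (Fin Ns) (Fin d) ℝ) (D : Matrix (Fin Nh) (Fin m) ℝ)
    (γ lam : ℝ) : Matrix (Fin d) (Fin m) ℝ :=
  (Qmat Xlow Xsafe γ lam)⁻¹ * Xlowᵀ * D


lemma card_filter_lt_fin {n r : ℕ} (h : r ≤ n) :
    ((Finset.univ : Finset (Fin n)).filter fun i : Fin n => (i : ℕ) < r).card = r := by
  have : ((Finset.univ : Finset (Fin n)).filter fun i : Fin n => (i : ℕ) < r)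
      = (Finset.univ : Finset (Fin r)).map ⟨Fin.castLE h, Fin.castLE_injective h⟩ := by
    ext x
    simp only [mem_filter, mem_univ, true_and, mem_map, Function.Embedding.coeFn_mk]
    constructor
    · intro hx; exact ⟨⟨x, hx⟩, rfl⟩
    · rintro ⟨y, rfl⟩; simpa using y.2
  rw [this, card_map, card_univ, Fintype.card_fin]

lemma comb {n : ℕ} (r : ℕ) (f p : Fin n → ℝ) (hf0 : ∀ i, 0 ≤ f i)
    (hmono : ∀ i j : Fin n, i ≤ j → f j ≤ f i)
    (hp0 : ∀ i, 0 ≤ p i) (hp1 : ∀ i, p i ≤ 1)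
    (hps : ∑ i, p i ≤ (r : ℝ)) :
    ∑ i, f i * p i ≤ ∑ i ∈ Finset.univ.filter (fun i : Fin n => (i : ℕ) < r), f i := by
  by_cases hrn : n ≤ r
  · have hfilter : (Finset.univ.filter (fun i : Fin n => (i : ℕ) < r)) = Finset.univ := by
      apply Finset.filter_true_of_mem
      intro i _; exact i.2.trans_le hrn
    rw [hfilter]
    exact Finset.sum_le_sum fun i _ => by
      nlinarith [hf0 i, hp1 i, hp0 i]
  · push_neg at hrn
    set ir : Fin n := ⟨r, hrn⟩ with hir
    set t := f ir with ht
    have ht0 : 0 ≤ t := hf0 ir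
    set S1 := Finset.univ.filter (fun i : Fin n => (i : ℕ) < r) with hS1
    set S2 := Finset.univ.filter (fun i : Fin n => ¬ (i : ℕ) < r) with hS2
    have hsplit : ∑ i, f i * p i = ∑ i ∈ S1, f i * p i + ∑ i ∈ S2, f i * p i :=
      (Finset.sum_filter_add_sum_filter_not _ _ _).symm
    have hpsplit : ∑ i, p i = ∑ i ∈ S1, p i + ∑ i ∈ S2, p i :=
      (Finset.sum_filter_add_sum_filter_not _ _ _).symm
    have hcard : S1.card = r := card_filter_lt_fin hrn.le
    have h2 : ∑ i ∈ S2, f i * p i ≤ t * ∑ i ∈ S2, p i := by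
      rw [Finset.mul_sum]
      apply Finset.sum_le_sum
      intro i hi
      simp only [hS2, mem_filter, mem_univ, true_and, not_lt] at hi
      have : f i ≤ t := hmono ir i (by exact hi)
      nlinarith [hp0 i]
    have h3 : ∑ i ∈ S2, p i ≤ (r : ℝ) - ∑ i ∈ S1, p i := by linarith [hpsplit ▸ hps]
    have h4 : ∑ i ∈ S1, (f i * p i + t * (1 - p i)) ≤ ∑ i ∈ S1, f i := by
      apply Finset.sum_le_sum
      intro i hi
      simp only [hS1, mem_filter, mem_univ, true_and] at hi
      have : t ≤ f i := hmono i ir (by exact hi.le)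
      nlinarith [hp1 i]
    have h5 : ∑ i ∈ S1, (f i * p i + t * (1 - p i))
        = ∑ i ∈ S1, f i * p i + t * r - t * ∑ i ∈ S1, p i := by
      rw [Finset.sum_add_distrib]
      have : ∑ i ∈ S1, t * (1 - p i) = t * r - t * ∑ i ∈ S1, p i := by
        rw [← Finset.mul_sum, Finset.sum_sub_distrib, Finset.sum_const, hcard]
        ring
      rw [this]; ring
    nlinarith [mul_le_mul_of_nonneg_left h3 ht0]


local notation "⟪" x ", " y "⟫" => @inner ℝ _ _ x y

lemma enormsq {d : ℕ} (x : EuclideanSpace ℝ (Fin d)) : ‖x‖^2 = ∑ i, (x i)^2 := by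
  rw [← real_inner_self_eq_norm_sq, PiLp.inner_apply]
  simp [RCLike.inner_apply, pow_two]

set_option maxHeartbeats 1600000 in
lemma key {d m : ℕ} (r : ℕ) (S Z : Matrix (Fin d) (Fin m) ℝ)
    (hSdiag : ∀ (i : Fin d) (j : Fin m), (i : ℕ) ≠ (j : ℕ) → S i j = 0)
    (hSnonneg : ∀ (i : Fin d) (j : Fin m), (i : ℕ) = (j : ℕ) → 0 ≤ S i j)
    (hSmono : ∀ (i : Fin d) (j : Fin m) (i' : Fin d) (j' : Fin m),
      (i : ℕ) = (j : ℕ) → (i' : ℕ) = (j' : ℕ) → (i : ℕ) ≤ (i' : ℕ) → S i' j' ≤ S i j)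
    (hZ : Z.rank ≤ r) :
    ∑ j : Fin m, ∑ i : Fin d, (if (i : ℕ) < r then (0:ℝ) else S i j)^2
      ≤ ∑ j : Fin m, ∑ i : Fin d, (Z i j - S i j)^2 := by
  classical
  set col : Fin m → EuclideanSpace ℝ (Fin d) :=
    fun j => (WithLp.equiv 2 (Fin d → ℝ)).symm (fun i => Z i j) with hcol
  have colapply : ∀ j i, col j i = Z i j := fun _ _ => rfl
  set K : Submodule ℝ (EuclideanSpace ℝ (Fin d)) := Submodule.span ℝ (Set.range col) with hKdef
  haveI : FiniteDimensional ℝ K := FiniteDimensional.span_of_finite ℝ (Set.finite_range col)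
  -- rank bound
  have hKr : finrank ℝ K ≤ r := by
    have hmap : Submodule.map (WithLp.linearEquiv 2 ℝ (Fin d → ℝ) : WithLp 2 (Fin d → ℝ) ≃ₗ[ℝ] (Fin d → ℝ)).toLinearMap K
        = Submodule.span ℝ (Set.range Z.col) := by
      rw [hKdef, Submodule.map_span, ← Set.range_comp]
      rfl
    have h2 : finrank ℝ K = Z.rank := by
      rw [Z.rank_eq_finrank_span_cols, ← hmap, LinearEquiv.finrank_map_eq]
    omega
  set e : Fin d → EuclideanSpace ℝ (Fin d) := fun i => EuclideanSpace.single i 1 with he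
  set p : Fin d → ℝ := fun i => ‖(K.orthogonalProjectionOnto (e i) : EuclideanSpace ℝ (Fin d))‖^2
    with hp
  have hp0 : ∀ i, 0 ≤ p i := fun i => sq_nonneg _
  have hnorm_e : ∀ i, ‖e i‖ = 1 := by intro i; simp [he]
  have hdecomp : ∀ i, (1:ℝ) = p i + ‖e i - (K.orthogonalProjectionOnto (e i) : EuclideanSpace ℝ (Fin d))‖^2 := by
    intro i
    have h := Submodule.norm_sq_eq_add_norm_sq_projection (e i) K
    rw [hnorm_e i, one_pow] at h
    have h2 : (Kᗮ.orthogonalProjectionOnto (e i) : EuclideanSpace ℝ (Fin d))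
        = e i - (K.orthogonalProjectionOnto (e i) : EuclideanSpace ℝ (Fin d)) :=
      Submodule.starProjection_orthogonal_val _
    rw [Submodule.coe_norm, Submodule.coe_norm, h2] at h
    exact h
  have hp1 : ∀ i, p i ≤ 1 := by
    intro i
    have := hdecomp i
    nlinarith [sq_nonneg ‖e i - (K.orthogonalProjectionOnto (e i) : EuclideanSpace ℝ (Fin d))‖]
  -- trace of projection bound
  have hsump : ∑ i, p i ≤ (r : ℝ) := by
    set b := stdOrthonormalBasis ℝ K with hb
    have hp_eq : ∀ i, p i = ∑ l, (⟪((b l : K) : EuclideanSpace ℝ (Fin d)), e i⟫)^2 := by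
      intro i
      have h1 : p i = ‖K.orthogonalProjectionOnto (e i)‖^2 := by
        rw [hp]; rw [Submodule.coe_norm]
      have h2 : ‖K.orthogonalProjectionOnto (e i)‖ = ‖b.repr (K.orthogonalProjectionOnto (e i))‖ :=
        (b.repr.norm_map _).symm
      have h3 : ‖b.repr (K.orthogonalProjectionOnto (e i))‖^2
          = ∑ l, (b.repr (K.orthogonalProjectionOnto (e i)) l)^2 := enormsq _
      have h4 : ∀ l, b.repr (K.orthogonalProjectionOnto (e i)) l
          = ⟪((b l : K) : EuclideanSpace ℝ (Fin d)), e i⟫ := by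
        intro l
        rw [b.repr_apply_apply, Submodule.inner_orthogonalProjection_eq_of_mem_left]
      rw [h1, h2, h3]
      exact Finset.sum_congr rfl fun l _ => by rw [h4]
    have hParseval : ∀ v : EuclideanSpace ℝ (Fin d), ∑ i, (⟪v, e i⟫)^2 = ‖v‖^2 := by
      intro v
      rw [enormsq]
      refine Finset.sum_congr rfl fun i _ => ?_
      rw [he]
      simp [EuclideanSpace.inner_single_right]
    calc ∑ i, p i = ∑ i, ∑ l, (⟪((b l : K) : EuclideanSpace ℝ (Fin d)), e i⟫)^2 :=
          Finset.sum_congr rfl fun i _ => hp_eq i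
      _ = ∑ l, ∑ i, (⟪((b l : K) : EuclideanSpace ℝ (Fin d)), e i⟫)^2 := Finset.sum_comm
      _ = ∑ l : Fin (finrank ℝ K), (1:ℝ) := by
          refine Finset.sum_congr rfl fun l _ => ?_
          rw [hParseval]
          rw [← Submodule.coe_norm]
          rw [b.orthonormal.1 l]
          norm_num
      _ = (finrank ℝ K : ℝ) := by simp
      _ ≤ (r : ℝ) := by exact_mod_cast hKr
  -- column vectors of S
  set scol : Fin m → EuclideanSpace ℝ (Fin d) :=
    fun j => (WithLp.equiv 2 (Fin d → ℝ)).symm (fun i => S i j) with hscoldef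
  set g : ℕ → ℝ := fun n => if h : n < d then p ⟨n, h⟩ else 0 with hg
  set qf : Fin m → ℝ := fun j => if h : (j : ℕ) < d then (S ⟨(j : ℕ), h⟩ j)^2 else 0 with hqf
  set pf : Fin m → ℝ := fun j => g (j : ℕ) with hpf
  have hg0 : ∀ n, 0 ≤ g n := by
    intro n; rw [hg]; dsimp only; split
    · exact hp0 _
    · exact le_refl 0
  have hpf0 : ∀ j, 0 ≤ pf j := fun j => hg0 _
  have hpf1 : ∀ j, pf j ≤ 1 := by
    intro j; rw [hpf, hg]; dsimp only; split
    · exact hp1 _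
    · exact zero_le_one
  have hqf0 : ∀ j, 0 ≤ qf j := by
    intro j; rw [hqf]; dsimp only; split
    · exact sq_nonneg _
    · exact le_refl 0
  have hqfmono : ∀ j j' : Fin m, j ≤ j' → qf j' ≤ qf j := by
    intro j j' hjj
    rw [hqf]; dsimp only
    split
    · next h' =>
      have h : (j : ℕ) < d := lt_of_le_of_lt hjj h'
      rw [dif_pos h]
      have h1 : 0 ≤ S ⟨(j' : ℕ), h'⟩ j' := hSnonneg _ _ rfl
      have h2 : S ⟨(j' : ℕ), h'⟩ j' ≤ S ⟨(j : ℕ), h⟩ j := hSmono _ _ _ _ rfl rfl hjj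
      exact pow_le_pow_left₀ h1 h2 2
    · split
      · exact sq_nonneg _
      · exact le_refl 0
  have hsumpf : ∑ j : Fin m, pf j ≤ (r : ℝ) := by
    have h1 : ∑ j : Fin m, pf j = ∑ n ∈ Finset.range m, g n := Fin.sum_univ_eq_sum_range g m
    have h2 : ∑ n ∈ Finset.range m, g n ≤ ∑ n ∈ Finset.range (m + d), g n :=
      Finset.sum_le_sum_of_subset_of_nonneg (Finset.range_subset_range.2 (by omega))
        (fun i _ _ => hg0 i)
    have h3 : ∑ n ∈ Finset.range (m + d), g n = ∑ n ∈ Finset.range d, g n := by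
      refine (Finset.sum_subset (Finset.range_subset_range.2 (by omega)) ?_).symm
      intro x _ hx
      rw [Finset.mem_range, not_lt] at hx
      rw [hg]; exact dif_neg (by omega)
    have h4 : ∑ n ∈ Finset.range d, g n = ∑ i : Fin d, p i := by
      rw [← Fin.sum_univ_eq_sum_range g d]
      refine Finset.sum_congr rfl fun i _ => ?_
      rw [hg]; dsimp only; rw [dif_pos i.2]
    rw [h1]
    calc ∑ n ∈ Finset.range m, g n ≤ ∑ n ∈ Finset.range (m + d), g n := h2
      _ = ∑ i : Fin d, p i := by rw [h3, h4]
      _ ≤ (r : ℝ) := hsump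
  -- left-hand side column identity
  have hLHS : ∀ j : Fin m, ∑ i : Fin d, (if (i : ℕ) < r then (0:ℝ) else S i j)^2
      = if (j : ℕ) < r then 0 else qf j := by
    intro j
    by_cases h : (j : ℕ) < d
    · set i0 : Fin d := ⟨(j : ℕ), h⟩ with hi0
      rw [Finset.sum_eq_single i0]
      · have : qf j = (S i0 j)^2 := by simp only [hqf]; rw [dif_pos h]
        rw [this]
        split_ifs <;> simp
      · intro i _ hi
        have hiv : (i : ℕ) ≠ (j : ℕ) := fun hc => hi (Fin.ext (by rw [hc]))
        rw [hSdiag i j hiv]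
        split_ifs <;> simp
      · intro hc; exact absurd (Finset.mem_univ i0) hc
    · have hz : ∀ i : Fin d, S i j = 0 := fun i => hSdiag i j (by omega)
      have : qf j = 0 := by rw [hqf]; exact dif_neg h
      rw [this]
      simp only [hz]
      split_ifs <;> simp
  -- right-hand side column lower bound
  have hRHS : ∀ j : Fin m, qf j * (1 - pf j) ≤ ∑ i : Fin d, (Z i j - S i j)^2 := by
    intro j
    have hsumeq : ∑ i : Fin d, (Z i j - S i j)^2 = ‖col j - scol j‖^2 := by
      rw [enormsq]; refine Finset.sum_congr rfl fun i _ => ?_; rw [PiLp.sub_apply]; rfl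
    by_cases h : (j : ℕ) < d
    · set i0 : Fin d := ⟨(j : ℕ), h⟩ with hi0
      set σ := S i0 j with hσ
      have hscol : scol j = σ • e i0 := by
        ext i
        show S i j = (σ • e i0) i
        have : (σ • e i0) i = σ * (if i = i0 then 1 else 0) := by
          rw [he]; dsimp only
          rw [PiLp.smul_apply, EuclideanSpace.single_apply, smul_eq_mul]
        rw [this]
        by_cases hii : i = i0
        · rw [hii, if_pos rfl, mul_one, hσ]
        · rw [if_neg hii, mul_zero]
          exact hSdiag i j (fun hc => hii (Fin.ext (by rw [hc])))
      have hzmem : col j ∈ K := Submodule.subset_span ⟨j, rfl⟩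
      set Ps : EuclideanSpace ℝ (Fin d) := (K.orthogonalProjectionOnto (scol j) : EuclideanSpace ℝ (Fin d)) with hPs
      have horth : ⟪scol j - Ps, Ps - col j⟫ = 0 :=
        Submodule.starProjection_inner_eq_zero (scol j) _
          (Submodule.sub_mem K (Submodule.coe_mem _) hzmem)
      have hpyth := norm_add_sq_eq_norm_sq_add_norm_sq_real horth
      rw [sub_add_sub_cancel] at hpyth
      have hge : ‖scol j - Ps‖^2 ≤ ‖col j - scol j‖^2 := by
        rw [norm_sub_rev (col j)]
        nlinarith [norm_nonneg (scol j - col j), norm_nonneg (Ps - col j)]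
      have hPs2 : Ps = σ • (K.orthogonalProjectionOnto (e i0) : EuclideanSpace ℝ (Fin d)) := by
        rw [hPs, hscol, _root_.map_smul, Submodule.coe_smul]
      have hval : ‖scol j - Ps‖^2 = σ^2 * (1 - p i0) := by
        rw [hscol, hPs2, ← smul_sub, norm_smul, Real.norm_eq_abs, mul_pow, sq_abs]
        have := hdecomp i0
        have h1 : ‖e i0 - (K.orthogonalProjectionOnto (e i0) : EuclideanSpace ℝ (Fin d))‖^2
            = 1 - p i0 := by linarith
        rw [h1]
      have hqval : qf j = σ^2 := by simp only [hqf]; rw [dif_pos h]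
      have hpval : pf j = p i0 := by
        rw [hpf, hg]; dsimp only; rw [dif_pos h]
      rw [hsumeq, hqval, hpval, ← hval]
      exact hge
    · have hq0 : qf j = 0 := by rw [hqf]; exact dif_neg h
      rw [hq0, zero_mul, hsumeq]
      positivity
  -- assemble
  have hcomb := comb r qf pf hqf0 hqfmono hpf0 hpf1 hsumpf
  have hL : ∑ j : Fin m, ∑ i : Fin d, (if (i : ℕ) < r then (0:ℝ) else S i j)^2
      = ∑ j ∈ Finset.univ.filter (fun j : Fin m => ¬ (j : ℕ) < r), qf j := by
    rw [Finset.sum_filter]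
    refine Finset.sum_congr rfl fun j _ => ?_
    rw [hLHS j]
    by_cases hj : (j : ℕ) < r <;> simp [hj]
  have hsplitq : ∑ j : Fin m, qf j
      = ∑ j ∈ Finset.univ.filter (fun j : Fin m => (j : ℕ) < r), qf j
        + ∑ j ∈ Finset.univ.filter (fun j : Fin m => ¬ (j : ℕ) < r), qf j :=
    (Finset.sum_filter_add_sum_filter_not _ _ _).symm
  have hR : ∑ j : Fin m, qf j * (1 - pf j) ≤ ∑ j : Fin m, ∑ i : Fin d, (Z i j - S i j)^2 :=
    Finset.sum_le_sum fun j _ => hRHS j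
  have hexp : ∑ j : Fin m, qf j * (1 - pf j) = ∑ j : Fin m, qf j - ∑ j : Fin m, qf j * pf j := by
    rw [← Finset.sum_sub_distrib]
    exact Finset.sum_congr rfl fun j _ => by ring
  rw [hL]
  linarith [hcomb, hsplitq, hR, hexp]


lemma card_filter_lt_le {n r : ℕ} :
    ((Finset.univ : Finset (Fin n)).filter fun i : Fin n => (i : ℕ) < r).card ≤ r := by
  refine le_trans (Finset.card_le_card_of_injOn (t := Finset.range r) (fun i : Fin n => (i : ℕ))
    (fun i hi => by
      simp only [Finset.mem_coe, Finset.mem_filter] at hi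
      exact Finset.mem_coe.2 (Finset.mem_range.2 hi.2))
    (Fin.val_injective.injOn)) (by simp)

lemma tswap {a b : ℕ} (A B : Matrix (Fin a) (Fin b) ℝ) :
    Matrix.trace (Aᵀ * B) = Matrix.trace (Bᵀ * A) := by
  rw [← Matrix.trace_transpose (Aᵀ * B), Matrix.transpose_mul, Matrix.transpose_transpose]

lemma tsq {a b : ℕ} (A B : Matrix (Fin a) (Fin b) ℝ) :
    Matrix.trace ((A - B)ᵀ * (A - B))
      = Matrix.trace (Aᵀ * A) - 2 * Matrix.trace (Aᵀ * B) + Matrix.trace (Bᵀ * B) := by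
  rw [Matrix.transpose_sub, Matrix.sub_mul, Matrix.mul_sub, Matrix.mul_sub,
    Matrix.trace_sub, Matrix.trace_sub, Matrix.trace_sub]
  have h := tswap A B
  linarith

lemma tent {a b : ℕ} (W : Matrix (Fin a) (Fin b) ℝ) :
    Matrix.trace (Wᵀ * W) = ∑ j : Fin b, ∑ i : Fin a, (W i j)^2 := by
  simp [Matrix.trace, Matrix.mul_apply, Matrix.diag, Matrix.transpose_apply, pow_two]

lemma tinv {a b : ℕ} (U : Matrix (Fin a) (Fin a) ℝ) (V : Matrix (Fin b) (Fin b) ℝ)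
    (hU : Uᵀ * U = 1) (hV : Vᵀ * V = 1) (W : Matrix (Fin a) (Fin b) ℝ) :
    Matrix.trace ((U * W * Vᵀ)ᵀ * (U * W * Vᵀ)) = Matrix.trace (Wᵀ * W) := by
  have hA : ∀ (A : Matrix (Fin a) (Fin b) ℝ),
      Matrix.trace ((A * Vᵀ)ᵀ * (A * Vᵀ)) = Matrix.trace (Aᵀ * A) := by
    intro A
    rw [Matrix.transpose_mul, Matrix.transpose_transpose,
      Matrix.mul_assoc V Aᵀ (A * Vᵀ), Matrix.trace_mul_comm V (Aᵀ * (A * Vᵀ)),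
      Matrix.mul_assoc Aᵀ (A * Vᵀ) V, Matrix.mul_assoc A Vᵀ V, hV, Matrix.mul_one]
  have hB : Matrix.trace ((U * W)ᵀ * (U * W)) = Matrix.trace (Wᵀ * W) := by
    rw [Matrix.transpose_mul, Matrix.mul_assoc Wᵀ Uᵀ (U * W), ← Matrix.mul_assoc Uᵀ U W,
      hU, Matrix.one_mul]
  rw [hA (U * W), hB]


/-- Theorem 1, Low-Rank Safety Alignment. Given an SVD
`R M = U S Vᵀ` with `U, V` orthogonal and `Σ` rectangular-diagonal with
nonincreasing nonnegative diagonal entries, and `Sr` obtained from `Σ` by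
zeroing the diagonal entries beyond the first `r`, the matrix
`Δ* = R⁻¹ U Sr Vᵀ` has rank at most `r` and minimizes `J` over the
matrices of rank at most `r`. -/
theorem stmt_7 {Nh Ns d m : ℕ}
    (Xlow : Matrix (Fin Nh) (Fin d) ℝ) (Xsafe : Matrix (Fin Ns) (Fin d) ℝ)
    (D : Matrix (Fin Nh) (Fin m) ℝ) (γ lam : ℝ) (hγ : 0 ≤ γ) (hlam : 0 < lam)
    (r : ℕ) (R : Matrix (Fin d) (Fin d) ℝ) (hR : IsUnit R)
    (hRQ : Rᵀ * R = Qmat Xlow Xsafe γ lam)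
    (U : Matrix (Fin d) (Fin d) ℝ) (hU : Uᵀ * U = 1)
    (V : Matrix (Fin m) (Fin m) ℝ) (hV : Vᵀ * V = 1)
    (S : Matrix (Fin d) (Fin m) ℝ)
    (hSdiag : ∀ (i : Fin d) (j : Fin m), (i : ℕ) ≠ (j : ℕ) → S i j = 0)
    (hSnonneg : ∀ (i : Fin d) (j : Fin m), (i : ℕ) = (j : ℕ) → 0 ≤ S i j)
    (hSmono : ∀ (i : Fin d) (j : Fin m) (i' : Fin d) (j' : Fin m),
      (i : ℕ) = (j : ℕ) → (i' : ℕ) = (j' : ℕ) → (i : ℕ) ≤ (i' : ℕ) → S i' j' ≤ S i j)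
    (hSVD : R * Mmat Xlow Xsafe D γ lam = U * S * Vᵀ)
    (Sr : Matrix (Fin d) (Fin m) ℝ)
    (hSr : ∀ (i : Fin d) (j : Fin m), Sr i j = if (i : ℕ) < r then S i j else 0) :
    (R⁻¹ * (U * Sr * Vᵀ)).rank ≤ r ∧
      ∀ Δ : Matrix (Fin d) (Fin m) ℝ, Δ.rank ≤ r →
        J Xlow Xsafe D γ lam (R⁻¹ * (U * Sr * Vᵀ)) ≤ J Xlow Xsafe D γ lam Δ := by
  classical
  set X := Xlow
  set Y := Xsafe
  set Q : Matrix (Fin d) (Fin d) ℝ := Qmat Xlow Xsafe γ lam with hQdef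
  set M : Matrix (Fin d) (Fin m) ℝ := Mmat Xlow Xsafe D γ lam with hMdef
  have hRdet : IsUnit R.det := (Matrix.isUnit_iff_isUnit_det R).mp hR
  have hRR : R * R⁻¹ = 1 := Matrix.mul_nonsing_inv R hRdet
  have hQdet : IsUnit Q.det := by
    rw [← hRQ, Matrix.det_mul, Matrix.det_transpose]
    exact hRdet.mul hRdet
  have hQM : Q * M = Xᵀ * D := by
    rw [hMdef]
    show Q * (Q⁻¹ * Xlowᵀ * D) = Xᵀ * D
    rw [Matrix.mul_assoc Q⁻¹ Xlowᵀ D, ← Matrix.mul_assoc Q Q⁻¹ (Xlowᵀ * D),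
      Matrix.mul_nonsing_inv Q hQdet, Matrix.one_mul]
  -- the weighted trace identity
  have tR : ∀ A B : Matrix (Fin d) (Fin m) ℝ,
      Matrix.trace ((R * A)ᵀ * (R * B)) = Matrix.trace (Aᵀ * (Q * B)) := by
    intro A B
    rw [Matrix.transpose_mul, Matrix.mul_assoc, ← Matrix.mul_assoc Rᵀ R B, hRQ]
  have tQ : ∀ A B : Matrix (Fin d) (Fin m) ℝ,
      Matrix.trace (Aᵀ * (Q * B))
        = Matrix.trace (Aᵀ * (Xᵀ * (X * B))) + γ * Matrix.trace (Aᵀ * (Yᵀ * (Y * B)))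
          + lam * Matrix.trace (Aᵀ * B) := by
    intro A B
    have hQB : Q * B = Xᵀ * (X * B) + γ • (Yᵀ * (Y * B)) + lam • B := by
      rw [hQdef]
      show (Xᵀ * X + γ • (Yᵀ * Y) + lam • (1 : Matrix (Fin d) (Fin d) ℝ)) * B = _
      rw [Matrix.add_mul, Matrix.add_mul, Matrix.smul_mul, Matrix.smul_mul,
        Matrix.one_mul, Matrix.mul_assoc, Matrix.mul_assoc]
    rw [hQB, Matrix.mul_add, Matrix.mul_add, Matrix.mul_smul, Matrix.mul_smul,
      Matrix.trace_add, Matrix.trace_add, Matrix.trace_smul, Matrix.trace_smul]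
    simp only [smul_eq_mul]
  have tXD : ∀ A : Matrix (Fin d) (Fin m) ℝ,
      Matrix.trace ((X * A)ᵀ * D) = Matrix.trace (Aᵀ * (Xᵀ * D)) := by
    intro A
    rw [Matrix.transpose_mul, Matrix.mul_assoc]
  have tXX : ∀ A : Matrix (Fin d) (Fin m) ℝ,
      Matrix.trace ((X * A)ᵀ * (X * A)) = Matrix.trace (Aᵀ * (Xᵀ * (X * A))) := by
    intro A
    rw [Matrix.transpose_mul, Matrix.mul_assoc]
  have tYY : ∀ A : Matrix (Fin d) (Fin m) ℝ,
      Matrix.trace ((Y * A)ᵀ * (Y * A)) = Matrix.trace (Aᵀ * (Yᵀ * (Y * A))) := by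
    intro A
    rw [Matrix.transpose_mul, Matrix.mul_assoc]
  set c : ℝ := Matrix.trace (Dᵀ * D) - Matrix.trace ((R * M)ᵀ * (R * M)) with hc
  have hJ : ∀ Δ : Matrix (Fin d) (Fin m) ℝ,
      J Xlow Xsafe D γ lam Δ
        = Matrix.trace ((R * Δ - R * M)ᵀ * (R * Δ - R * M)) + c := by
    intro Δ
    have e1 := tsq (X * Δ) D
    have e2 := tsq (R * Δ) (R * M)
    have e3 := tR Δ Δ
    have e4 := tR Δ M
    have e5 := tQ Δ Δ
    have e6 : Matrix.trace (Δᵀ * (Q * M)) = Matrix.trace (Δᵀ * (Xᵀ * D)) := by rw [hQM]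
    have e7 := tXD Δ
    have e8 := tXX Δ
    have e9 := tYY Δ
    show Matrix.trace ((X * Δ - D)ᵀ * (X * Δ - D))
        + γ * Matrix.trace ((Y * Δ)ᵀ * (Y * Δ)) + lam * Matrix.trace (Δᵀ * Δ) = _
    rw [e1, e2, e3, e4, e5, e6, e7, e8, e9, hc]
    ring
  -- the minimizer
  set Δs : Matrix (Fin d) (Fin m) ℝ := R⁻¹ * (U * Sr * Vᵀ) with hΔs
  have hRΔs : R * Δs = U * Sr * Vᵀ := by
    rw [hΔs, ← Matrix.mul_assoc, hRR, Matrix.one_mul]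
  have hUU : U * Uᵀ = 1 := mul_eq_one_comm.mp hU
  have hVV : V * Vᵀ = 1 := mul_eq_one_comm.mp hV
  constructor
  · -- rank bound
    set Pr : Matrix (Fin d) (Fin d) ℝ :=
      Matrix.diagonal (fun i : Fin d => if (i : ℕ) < r then (1:ℝ) else 0) with hPr
    have hfact : Sr = Pr * S := by
      ext i j
      rw [hPr, Matrix.diagonal_mul, hSr i j]
      split_ifs <;> simp
    have h1 : (R⁻¹ * (U * Sr * Vᵀ)).rank ≤ Sr.rank := by
      calc (R⁻¹ * (U * Sr * Vᵀ)).rank ≤ (U * Sr * Vᵀ).rank := Matrix.rank_mul_le_right _ _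
        _ ≤ (U * Sr).rank := Matrix.rank_mul_le_left _ _
        _ ≤ Sr.rank := Matrix.rank_mul_le_right _ _
    have h2 : Sr.rank ≤ r := by
      rw [hfact]
      calc (Pr * S).rank ≤ Pr.rank := Matrix.rank_mul_le_left _ _
        _ ≤ r := by
          rw [hPr, Matrix.rank_diagonal]
          rw [Fintype.card_subtype]
          have heq : (Finset.univ : Finset (Fin d)).filter
                (fun i : Fin d => (if (i : ℕ) < r then (1:ℝ) else 0) ≠ 0)
              = (Finset.univ : Finset (Fin d)).filter (fun i : Fin d => (i : ℕ) < r) := by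
            refine Finset.filter_congr fun i _ => ?_
            split_ifs with h <;> simp [h]
          rw [heq]
          exact card_filter_lt_le
    exact le_trans h1 h2
  · -- optimality
    intro Δ hΔ
    set Zm : Matrix (Fin d) (Fin m) ℝ := Uᵀ * (R * Δ) * V with hZm
    have hZrank : Zm.rank ≤ r := by
      calc Zm.rank ≤ (Uᵀ * (R * Δ)).rank := Matrix.rank_mul_le_left _ _
        _ ≤ (R * Δ).rank := Matrix.rank_mul_le_right _ _
        _ ≤ Δ.rank := Matrix.rank_mul_le_right _ _
        _ ≤ r := hΔ
    have hUZV : U * Zm * Vᵀ = R * Δ := by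
      rw [hZm, ← Matrix.mul_assoc U (Uᵀ * (R * Δ)) V, ← Matrix.mul_assoc U Uᵀ (R * Δ), hUU,
        Matrix.one_mul, Matrix.mul_assoc (R * Δ) V Vᵀ, hVV, Matrix.mul_one]
    have hdiff : R * Δ - R * M = U * (Zm - S) * Vᵀ := by
      rw [Matrix.mul_sub, Matrix.sub_mul, hUZV, ← hSVD]
    have hdiffs : R * Δs - R * M = U * (Sr - S) * Vᵀ := by
      rw [Matrix.mul_sub, Matrix.sub_mul, ← hRΔs, ← hSVD]
    have hideal : Matrix.trace ((R * Δs - R * M)ᵀ * (R * Δs - R * M))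
        = ∑ j : Fin m, ∑ i : Fin d, (if (i : ℕ) < r then (0:ℝ) else S i j)^2 := by
      rw [hdiffs, tinv U V hU hV, tent]
      refine Finset.sum_congr rfl fun j _ => Finset.sum_congr rfl fun i _ => ?_
      rw [Matrix.sub_apply, hSr i j]
      split_ifs <;> ring
    have hgen : Matrix.trace ((R * Δ - R * M)ᵀ * (R * Δ - R * M))
        = ∑ j : Fin m, ∑ i : Fin d, (Zm i j - S i j)^2 := by
      rw [hdiff, tinv U V hU hV, tent]
      refine Finset.sum_congr rfl fun j _ => Finset.sum_congr rfl fun i _ => ?_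
      rw [Matrix.sub_apply]
    have hkey := key r S Zm hSdiag hSnonneg hSmono hZrank
    rw [hJ Δs, hJ Δ, hideal, hgen]
    linarith
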